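/- Let f ≠ -z be pseudo-involutory with f'(0)=1 and h_f = (√(zf))^ = z·h_o(z²) + z²·h_e(z²). Then h_o = √(1 + z·h_e²), i.e., h_o² - z·h_e² = 1 as formal power series. -/

import Mathlib

open PowerSeries

/-- Composition `f ∘ g` of formal power series over `ℝ`, i.e. `f(g(z))`
(the usual composition when `g` has zero constant term). -/
noncomputable def pscomp (f g : PowerSeries ℝ) : PowerSeries ℝ :=
  PowerSeries.mk fun n => ∑ k ∈ Finset.range (n + 1), coeff k f * coeff n (g ^ k)

namespace PS

lemma coeff_pscomp (f g : PowerSeries ℝ) (n : ℕ) :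
    coeff n (pscomp f g) = ∑ k ∈ Finset.range (n + 1), coeff k f * coeff n (g ^ k) := by
  simp [pscomp]

lemma coeff_pow_eq_zero {g : PowerSeries ℝ} (hg : constantCoeff g = 0)
    {n k : ℕ} (h : n < k) : coeff n (g ^ k) = 0 := by
  have hx : (X : PowerSeries ℝ) ^ k ∣ g ^ k := pow_dvd_pow_of_dvd (X_dvd_iff.mpr hg) k
  exact (X_pow_dvd_iff.mp hx) n h

lemma pscomp_congr_left {P Q : PowerSeries ℝ} (c : PowerSeries ℝ) (n : ℕ)
    (h : ∀ k ≤ n, coeff k P = coeff k Q) :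
    coeff n (pscomp P c) = coeff n (pscomp Q c) := by
  rw [coeff_pscomp, coeff_pscomp]
  refine Finset.sum_congr rfl fun k hk => ?_
  rw [h k (Nat.lt_succ_iff.mp (Finset.mem_range.mp hk))]

lemma constantCoeff_pscomp (f g : PowerSeries ℝ) :
    constantCoeff (pscomp f g) = constantCoeff f := by
  have := coeff_pscomp f g 0
  simpa using this

lemma pscomp_add (a b g : PowerSeries ℝ) :
    pscomp (a + b) g = pscomp a g + pscomp b g := by
  ext n
  simp [coeff_pscomp, add_mul, Finset.sum_add_distrib]

lemma pscomp_neg (a g : PowerSeries ℝ) : pscomp (-a) g = -pscomp a g := by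
  ext n
  simp [coeff_pscomp, Finset.sum_neg_distrib]

lemma pscomp_sub (a b g : PowerSeries ℝ) :
    pscomp (a - b) g = pscomp a g - pscomp b g := by
  rw [sub_eq_add_neg, pscomp_add, pscomp_neg, sub_eq_add_neg]

lemma pscomp_C (r : ℝ) (g : PowerSeries ℝ) : pscomp (C r) g = C r := by
  ext n
  rw [coeff_pscomp]
  rw [Finset.sum_eq_single 0]
  · simp [coeff_C]
  · intro k hk hk0
    simp [coeff_C, hk0]
  · simp

lemma pscomp_one (g : PowerSeries ℝ) : pscomp 1 g = 1 := by
  have := pscomp_C 1 g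
  simpa using this

lemma pscomp_X {g : PowerSeries ℝ} (hg : constantCoeff g = 0) : pscomp X g = g := by
  ext n
  rw [coeff_pscomp]
  rcases Nat.eq_zero_or_pos n with hn | hn
  · subst hn
    simpa [coeff_X] using hg.symm
  · rw [Finset.sum_eq_single 1]
    · simp [coeff_X]
    · intro k hk hk1
      simp [coeff_X, hk1]
    · intro h
      exact absurd (Finset.mem_range.mpr (by omega)) h

lemma coeff_eval₂ {g : PowerSeries ℝ} (hg : constantCoeff g = 0)
    (p : Polynomial ℝ) (n : ℕ) :
    coeff n (p.eval₂ (C) g) =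
      ∑ k ∈ Finset.range (n + 1), p.coeff k * coeff n (g ^ k) := by
  rw [Polynomial.eval₂_eq_sum, Polynomial.sum, map_sum]
  have h1 : ∀ k ∈ p.support, coeff n (C (p.coeff k) * g ^ k)
      = p.coeff k * coeff n (g ^ k) := by
    intro k _; rw [coeff_C_mul]
  rw [Finset.sum_congr rfl h1]
  calc ∑ k ∈ p.support, p.coeff k * coeff n (g ^ k)
      = ∑ k ∈ p.support ∪ Finset.range (n+1), p.coeff k * coeff n (g ^ k) :=
        Finset.sum_subset Finset.subset_union_left
          (fun k _ hk => by rw [Polynomial.notMem_support_iff.mp hk, zero_mul])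
    _ = ∑ k ∈ Finset.range (n + 1), p.coeff k * coeff n (g ^ k) :=
        (Finset.sum_subset Finset.subset_union_right
          (fun k _ hk => by rw [coeff_pow_eq_zero hg (by simpa using hk), mul_zero])).symm

lemma coeff_pscomp_trunc {g : PowerSeries ℝ} (hg : constantCoeff g = 0)
    (f : PowerSeries ℝ) {n m : ℕ} (hnm : n < m) :
    coeff n (pscomp f g) = coeff n ((trunc m f).eval₂ (C) g) := by
  rw [coeff_pscomp, coeff_eval₂ hg]
  refine Finset.sum_congr rfl fun k hk => ?_
  rw [coeff_trunc, if_pos (by have := Finset.mem_range.mp hk; omega)]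

lemma pscomp_mul {g : PowerSeries ℝ} (hg : constantCoeff g = 0) (a b : PowerSeries ℝ) :
    pscomp (a * b) g = pscomp a g * pscomp b g := by
  ext n
  rw [coeff_pscomp_trunc hg (a*b) (Nat.lt_succ_self n)]
  have key : ∀ k ≤ n, (trunc (n+1) (a*b)).coeff k
      = (trunc (n+1) a * trunc (n+1) b).coeff k := by
    intro k hk
    rw [coeff_trunc, if_pos (by omega), PowerSeries.coeff_mul, Polynomial.coeff_mul]
    refine Finset.sum_congr rfl fun p hp => ?_
    have h1 : p.1 ≤ k := Finset.HasAntidiagonal.antidiagonal.fst_le hp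
    have h2 : p.2 ≤ k := Finset.HasAntidiagonal.antidiagonal.snd_le hp
    rw [coeff_trunc, if_pos (by omega), coeff_trunc, if_pos (by omega)]
  have h2 : coeff n ((trunc (n+1) (a*b)).eval₂ (C) g)
      = coeff n ((trunc (n+1) a * trunc (n+1) b).eval₂ (C) g) := by
    rw [coeff_eval₂ hg, coeff_eval₂ hg]
    refine Finset.sum_congr rfl fun k hk => ?_
    rw [key k (Nat.lt_succ_iff.mp (Finset.mem_range.mp hk))]
  rw [h2, Polynomial.eval₂_mul, PowerSeries.coeff_mul, PowerSeries.coeff_mul]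
  refine Finset.sum_congr rfl fun p hp => ?_
  have h1 : p.1 ≤ n := Finset.HasAntidiagonal.antidiagonal.fst_le hp
  have h2 : p.2 ≤ n := Finset.HasAntidiagonal.antidiagonal.snd_le hp
  rw [coeff_pscomp_trunc hg a (show p.1 < n+1 by omega),
      coeff_pscomp_trunc hg b (show p.2 < n+1 by omega)]

lemma pscomp_pow {g : PowerSeries ℝ} (hg : constantCoeff g = 0) (a : PowerSeries ℝ) (k : ℕ) :
    pscomp (a ^ k) g = (pscomp a g) ^ k := by
  induction k with
  | zero => simpa using pscomp_one g
  | succ k ih => rw [pow_succ, pscomp_mul hg, ih, pow_succ]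

lemma pscomp_eval₂ {b c : PowerSeries ℝ} (hc : constantCoeff c = 0) (p : Polynomial ℝ) :
    pscomp (p.eval₂ (C) b) c = p.eval₂ (C) (pscomp b c) := by
  induction p using Polynomial.induction_on' with
  | add p q hp hq => rw [Polynomial.eval₂_add, pscomp_add, hp, hq, Polynomial.eval₂_add]
  | monomial k r =>
    rw [Polynomial.eval₂_monomial, Polynomial.eval₂_monomial, pscomp_mul hc,
      pscomp_C, pscomp_pow hc]

lemma pscomp_assoc {b c : PowerSeries ℝ} (hb : constantCoeff b = 0)
    (hc : constantCoeff c = 0) (a : PowerSeries ℝ) :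
    pscomp (pscomp a b) c = pscomp a (pscomp b c) := by
  ext n
  have hbc : constantCoeff (pscomp b c) = 0 := by rw [constantCoeff_pscomp, hb]
  rw [pscomp_congr_left c n (fun k hk =>
    coeff_pscomp_trunc hb a (show k < n+1 by omega)),
    pscomp_eval₂ hc, ← coeff_pscomp_trunc hbc a (Nat.lt_succ_self n)]

lemma pscomp_X_right (f : PowerSeries ℝ) : pscomp f X = f := by
  ext n
  rw [coeff_pscomp]
  rw [Finset.sum_eq_single n]
  · rw [coeff_X_pow, if_pos rfl, mul_one]
  · intro k hk hkn
    rw [coeff_X_pow, if_neg (fun h => hkn h.symm), mul_zero]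
  · intro h
    exact absurd (Finset.mem_range.mpr (Nat.lt_succ_self n)) h

lemma pscomp_Xsq_inj {q : PowerSeries ℝ} (h : pscomp q (X ^ 2) = 0) : q = 0 := by
  ext n
  have h2 : coeff (2 * n) (pscomp q (X ^ 2)) = coeff n q := by
    rw [coeff_pscomp]
    rw [Finset.sum_eq_single n]
    · rw [← pow_mul, coeff_X_pow, if_pos rfl, mul_one]
    · intro k hk hkn
      rw [← pow_mul, coeff_X_pow, if_neg (by omega), mul_zero]
    · intro hn
      exact absurd (Finset.mem_range.mpr (by omega)) hn
  rw [h] at h2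
  simpa using h2.symm

end PS

open PS

/-- For pseudo-involutory f ≠ -z, writing h_f = (√(zf))^ as
h_f(z) = z·h_o(z²) + z²·h_e(z²), one has h_o² - z·h_e² = 1,
i.e. h_o = √(1 + z·h_e²). -/
theorem stmt_6 (f s sbar ho he : PowerSeries ℝ)
    (hf0 : constantCoeff f = 0) (hf1 : coeff 1 f = 1)
    (hpi : pscomp f (-f) = -X) (hne : f ≠ -X)
    (hsq : s ^ 2 = X * f) (hs0 : constantCoeff s = 0) (hs1 : coeff 1 s = 1)
    (hi1 : pscomp s sbar = X) (hi2 : pscomp sbar s = X)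
    (hdec : -(pscomp sbar (-X)) = X * pscomp ho (X ^ 2) + X ^ 2 * pscomp he (X ^ 2)) :
    ho ^ 2 - X * he ^ 2 = 1 := by
  classical
  have hnf0 : constantCoeff (-f) = 0 := by rw [map_neg, hf0, neg_zero]
  have hX0 : constantCoeff (X : PowerSeries ℝ) = 0 := constantCoeff_X
  have hnX0 : constantCoeff (-X : PowerSeries ℝ) = 0 := by rw [map_neg, hX0, neg_zero]
  have hX20 : constantCoeff ((X : PowerSeries ℝ) ^ 2) = 0 := by
    rw [map_pow, hX0]; ring
  have hsb0 : constantCoeff sbar = 0 := by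
    have h := constantCoeff_pscomp sbar s
    rw [hi2] at h
    rw [← h, hX0]
  have hzero : pscomp 0 sbar = 0 := by
    have h := pscomp_C 0 sbar
    simpa using h
  -- Step A : s ∘ (-f) = -s
  have hu2 : (pscomp s (-f)) ^ 2 = s ^ 2 := by
    rw [← pscomp_pow hnf0, hsq, pscomp_mul hnf0, pscomp_X hnf0, hpi]
    ring
  have hA : pscomp s (-f) = -s := by
    have hfac : (pscomp s (-f) - s) * (pscomp s (-f) + s) = 0 := by
      linear_combination hu2
    rcases mul_eq_zero.mp hfac with h | h
    · exfalso
      have hc : coeff 1 (pscomp s (-f)) = coeff 1 s := by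
        rw [sub_eq_zero.mp h]
      rw [coeff_pscomp, Finset.sum_range_succ, Finset.sum_range_succ,
        Finset.sum_range_zero] at hc
      simp only [pow_zero, pow_one, map_neg, hf1, hs1, coeff_one] at hc
      norm_num at hc
    · exact eq_neg_of_add_eq_zero_left h
  -- Step B : sbar ∘ (-s) = -f
  have hB : pscomp sbar (-s) = -f := by
    have h1 : pscomp sbar (pscomp s (-f)) = pscomp (pscomp sbar s) (-f) :=
      (pscomp_assoc hs0 hnf0 sbar).symm
    rw [hA, hi2, pscomp_X hnf0] at h1
    exact h1
  -- Step C : sbar · (sbar ∘ (-X)) = -X²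
  have hns : pscomp (-X) s = -s := by rw [pscomp_neg, pscomp_X hs0]
  have hCkey : pscomp (sbar * pscomp sbar (-X) + X ^ 2) s = 0 := by
    rw [pscomp_add, pscomp_mul hs0, hi2, pscomp_pow hs0, pscomp_X hs0,
      pscomp_assoc hnX0 hs0, hns, hB, hsq]
    ring
  have hC : sbar * pscomp sbar (-X) = -(X ^ 2) := by
    have h1 := congrArg (fun t => pscomp t sbar) hCkey
    simp only [hzero] at h1
    rw [pscomp_assoc hs0 hsb0, hi1, pscomp_X_right] at h1
    exact eq_neg_of_add_eq_zero_left h1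
  -- Step D
  have hXX : pscomp (-X) (-X) = (X : PowerSeries ℝ) := by
    rw [pscomp_neg, pscomp_X hnX0, neg_neg]
  have hX2nX : pscomp (X ^ 2) (-X) = (X : PowerSeries ℝ) ^ 2 := by
    rw [pscomp_pow hnX0, pscomp_X hnX0]
    ring
  have hAnX : pscomp (pscomp ho (X ^ 2)) (-X) = pscomp ho (X ^ 2) := by
    rw [pscomp_assoc hX20 hnX0, hX2nX]
  have hBnX : pscomp (pscomp he (X ^ 2)) (-X) = pscomp he (X ^ 2) := by
    rw [pscomp_assoc hX20 hnX0, hX2nX]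
  have hleft : pscomp (-(pscomp sbar (-X))) (-X) = -sbar := by
    rw [pscomp_neg, pscomp_assoc hnX0 hnX0, hXX, pscomp_X_right]
  have hright : pscomp (-(pscomp sbar (-X))) (-X)
      = -(X * pscomp ho (X ^ 2)) + X ^ 2 * pscomp he (X ^ 2) := by
    rw [hdec, pscomp_add, pscomp_mul hnX0, pscomp_mul hnX0, pscomp_X hnX0,
      hX2nX, hAnX, hBnX]
    ring
  have hsbar_eq : -sbar = -(X * pscomp ho (X ^ 2)) + X ^ 2 * pscomp he (X ^ 2) := by
    rw [← hleft, hright]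
  have key : (X * pscomp ho (X ^ 2) + X ^ 2 * pscomp he (X ^ 2)) *
      (-(X * pscomp ho (X ^ 2)) + X ^ 2 * pscomp he (X ^ 2)) = -(X ^ 2) := by
    rw [← hdec, ← hsbar_eq, ← hC]
    ring
  have hX2ne : (X : PowerSeries ℝ) ^ 2 ≠ 0 := pow_ne_zero _ X_ne_zero
  have hABC : pscomp ho (X ^ 2) ^ 2 - X ^ 2 * pscomp he (X ^ 2) ^ 2 - 1 = 0 := by
    have h2 : (X : PowerSeries ℝ) ^ 2 *
        (pscomp ho (X ^ 2) ^ 2 - X ^ 2 * pscomp he (X ^ 2) ^ 2 - 1) = 0 := by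
      linear_combination -key
    rcases mul_eq_zero.mp h2 with h | h
    · exact absurd h hX2ne
    · exact h
  have final : pscomp (ho ^ 2 - X * he ^ 2 - 1) (X ^ 2) = 0 := by
    rw [pscomp_sub, pscomp_sub, pscomp_pow hX20, pscomp_mul hX20,
      pscomp_pow hX20, pscomp_X hX20, pscomp_one]
    exact hABC
  have hq := pscomp_Xsq_inj final
  linear_combination hq
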